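/- For any m ≥ 4 and any graph H on n vertices, χ_{C_m}(H) + χ_{C_m}(complement of H) ≤ ⌈n/2⌉ + 1. -/
import Mathlib


open SimpleGraph

/-- `H` contains a copy of `G`: an injective map preserving adjacency. -/
def ContainsCopy {α β : Type*} (G : SimpleGraph α) (H : SimpleGraph β) : Prop :=
  ∃ f : α ↪ β, ∀ a b, G.Adj a b → H.Adj (f a) (f b)

/-- `H` is `G`-free. -/
def GFree {α β : Type*} (G : SimpleGraph α) (H : SimpleGraph β) : Prop :=
  ¬ ContainsCopy G H

/-- The `G`-free chromatic number of `H`. -/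
noncomputable def gChrom {α β : Type*} (G : SimpleGraph α) (H : SimpleGraph β) : ℕ :=
  sInf {k | ∃ c : β → Fin k, ∀ i, GFree G (H.induce {v | c v = i})}

/-- `H` is `G`-free `k`-critical. -/
def GFreeCritical {α β : Type*} (G : SimpleGraph α) (H : SimpleGraph β) (k : ℕ) : Prop :=
  gChrom G H = k ∧ ∀ F : H.Subgraph, F ≠ ⊤ → gChrom G F.coe ≤ k - 1

section Aux

variable {β : Type*}

/-- Adding a vertex with at most one neighbor in a `C_m`-free set keeps it `C_m`-free. -/
lemma aux_extend (m : ℕ) (hm : 3 ≤ m) (G : SimpleGraph β) (A : Set β) (x : β)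
    (hfree : GFree (cycleGraph m) (G.induce A))
    (hdeg : ∀ y₁ ∈ A, ∀ y₂ ∈ A, G.Adj x y₁ → G.Adj x y₂ → y₁ = y₂) :
    GFree (cycleGraph m) (G.induce (A ∪ {x})) := by
  haveI : NeZero m := ⟨by omega⟩
  rintro ⟨f, hf⟩
  by_cases hcase : ∀ j, (f j : β) ≠ x
  · apply hfree
    refine ⟨⟨fun j => ⟨(f j : β), ((f j).2.resolve_right (hcase j))⟩, fun a b hab => ?_⟩, ?_⟩
    · have hcoe := congrArg Subtype.val hab
      exact f.injective (Subtype.ext hcoe)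
    · intro a b hab
      have := hf a b hab
      simp only [comap_adj, Function.Embedding.coe_subtype] at this ⊢
      exact this
  · push_neg at hcase
    obtain ⟨j₀, hj₀⟩ := hcase
    have adj1 : (cycleGraph m).Adj j₀ (j₀ + 1) := by
      rw [cycleGraph_adj']
      right
      rw [add_sub_cancel_left]
      simpa [Fin.val_one'] using Nat.mod_eq_of_lt (by omega)
    have adj2 : (cycleGraph m).Adj j₀ (j₀ - 1) := by
      rw [cycleGraph_adj']
      left
      rw [sub_sub_cancel]
      simpa [Fin.val_one'] using Nat.mod_eq_of_lt (by omega)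
    have hA1 : (f (j₀ + 1) : β) ∈ A := by
      refine (f (j₀ + 1)).2.resolve_right ?_
      intro h
      have : f (j₀ + 1) = f j₀ := Subtype.ext (by rw [hj₀]; exact h)
      exact adj1.ne' (f.injective this)
    have hA2 : (f (j₀ - 1) : β) ∈ A := by
      refine (f (j₀ - 1)).2.resolve_right ?_
      intro h
      have : f (j₀ - 1) = f j₀ := Subtype.ext (by rw [hj₀]; exact h)
      exact adj2.ne' (f.injective this)
    have hadj1 : G.Adj x (f (j₀ + 1) : β) := by
      have := hf _ _ adj1
      simp only [comap_adj, Function.Embedding.coe_subtype] at this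
      rwa [hj₀] at this
    have hadj2 : G.Adj x (f (j₀ - 1) : β) := by
      have := hf _ _ adj2
      simp only [comap_adj, Function.Embedding.coe_subtype] at this
      rwa [hj₀] at this
    have heq : (f (j₀ + 1) : β) = (f (j₀ - 1) : β) :=
      hdeg _ hA1 _ hA2 hadj1 hadj2
    have hjj : j₀ + 1 = j₀ - 1 := f.injective (Subtype.ext heq)
    have h2 : (1 : Fin m) = -1 := by
      have h := hjj
      rw [sub_eq_add_neg] at h
      exact add_left_cancel h
    have h3 : (1 : Fin m) + 1 = 0 := eq_neg_iff_add_eq_zero.mp h2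
    have h4 := congrArg Fin.val h3
    rw [Fin.val_add, Fin.val_one', Fin.val_zero] at h4
    rw [Nat.mod_eq_of_lt (show 1 < m by omega)] at h4
    rw [Nat.mod_eq_of_lt (show 1 + 1 < m by omega)] at h4
    omega

/-- Greedy coloring: if every nonempty set has a vertex of internal degree ≤ d,
then `2k > d` colors suffice to avoid `C_m` in every class. -/
lemma aux_greedy [Fintype β] [DecidableEq β] (m : ℕ) (hm : 3 ≤ m) (G : SimpleGraph β)
    [DecidableRel G.Adj] (d k : ℕ) (hdk : d < 2 * k)
    (hP : ∀ S : Finset β, S.Nonempty → ∃ x ∈ S, (S.filter (G.Adj x)).card ≤ d) :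
    ∀ S : Finset β, ∃ c : β → Fin k, ∀ i,
      GFree (cycleGraph m) (G.induce {v | v ∈ S ∧ c v = i}) := by
  intro S
  induction S using Finset.strongInductionOn with
  | _ S IH =>
  rcases S.eq_empty_or_nonempty with rfl | hS
  · refine ⟨fun _ => ⟨0, by omega⟩, fun i => ?_⟩
    rintro ⟨f, -⟩
    exact absurd (f ⟨0, by omega⟩).2.1 (Finset.notMem_empty _)
  · obtain ⟨x, hxS, hxd⟩ := hP S hS
    obtain ⟨c', hc'⟩ := IH (S.erase x) (Finset.erase_ssubset hxS)
    set T := (S.erase x).filter (fun y => G.Adj x y) with hTdef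
    have hTd : T.card ≤ d := by
      refine le_trans (Finset.card_le_card ?_) hxd
      intro y hy
      rw [hTdef, Finset.mem_filter, Finset.mem_erase] at hy
      exact Finset.mem_filter.mpr ⟨hy.1.2, hy.2⟩
    have hpig : ∃ i₀ : Fin k, (T.filter (fun y => c' y = i₀)).card ≤ 1 := by
      by_contra hall
      push_neg at hall
      have hsum : T.card = ∑ i : Fin k, (T.filter (fun y => c' y = i)).card :=
        Finset.card_eq_sum_card_fiberwise (fun y _ => Finset.mem_univ (c' y))
      have h2k : 2 * k ≤ T.card := by
        rw [hsum]
        calc 2 * k = ∑ _i : Fin k, 2 := by simp [mul_comm]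
          _ ≤ ∑ i : Fin k, (T.filter (fun y => c' y = i)).card :=
            Finset.sum_le_sum fun i _ => hall i
      omega
    obtain ⟨i₀, hi₀⟩ := hpig
    refine ⟨Function.update c' x i₀, fun i => ?_⟩
    by_cases hii : i = i₀
    · subst hii
      have hsets : {v | v ∈ S ∧ Function.update c' x i v = i} =
          ({v | v ∈ S.erase x ∧ c' v = i} ∪ {x} : Set β) := by
        ext v
        by_cases hv : v = x
        · subst hv
          simp [hxS]
        · simp [Function.update_of_ne hv, Finset.mem_erase, hv]
      rw [hsets]
      refine aux_extend m hm G _ x (hc' i) ?_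
      intro y₁ hy₁ y₂ hy₂ ha₁ ha₂
      refine Finset.card_le_one.mp hi₀ y₁ ?_ y₂ ?_
      · exact Finset.mem_filter.mpr ⟨Finset.mem_filter.mpr ⟨hy₁.1, ha₁⟩, hy₁.2⟩
      · exact Finset.mem_filter.mpr ⟨Finset.mem_filter.mpr ⟨hy₂.1, ha₂⟩, hy₂.2⟩
    · have hsets : {v | v ∈ S ∧ Function.update c' x i₀ v = i} =
          {v | v ∈ S.erase x ∧ c' v = i} := by
        ext v
        by_cases hv : v = x
        · subst hv
          simp [Ne.symm hii]
        · simp [Function.update_of_ne hv, Finset.mem_erase, hv]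
      rw [hsets]
      exact hc' i

/-- The "degeneracy" of a graph. -/
noncomputable def auxDeg [Fintype β] (G : SimpleGraph β) [DecidableRel G.Adj] : ℕ :=
  Finset.univ.sup (fun S : Finset β =>
    if h : S.Nonempty then S.inf' h (fun x => (S.filter (G.Adj x)).card) else 0)

lemma auxDeg_spec [Fintype β] (G : SimpleGraph β) [DecidableRel G.Adj] :
    ∀ S : Finset β, S.Nonempty → ∃ x ∈ S, (S.filter (G.Adj x)).card ≤ auxDeg G := by
  intro S hS
  have hle : (if h : S.Nonempty then S.inf' h (fun x => (S.filter (G.Adj x)).card) else 0)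
      ≤ auxDeg G := by
    unfold auxDeg
    exact Finset.le_sup (f := fun S : Finset β =>
      if h : S.Nonempty then S.inf' h (fun x => (S.filter (G.Adj x)).card) else 0)
      (Finset.mem_univ S)
  rw [dif_pos hS] at hle
  obtain ⟨x, hxS, hx⟩ := Finset.exists_mem_eq_inf' hS (fun x => (S.filter (G.Adj x)).card)
  exact ⟨x, hxS, by rw [← hx]; exact hle⟩

lemma auxDeg_witness [Fintype β] [Nonempty β] (G : SimpleGraph β) [DecidableRel G.Adj] :
    ∃ S : Finset β, S.Nonempty ∧ ∀ x ∈ S, auxDeg G ≤ (S.filter (G.Adj x)).card := by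
  obtain ⟨S, -, hSe⟩ := Finset.exists_mem_eq_sup Finset.univ ⟨∅, Finset.mem_univ _⟩
    (fun S : Finset β =>
      if h : S.Nonempty then S.inf' h (fun x => (S.filter (G.Adj x)).card) else 0)
  have hSe' : auxDeg G =
      (if h : S.Nonempty then S.inf' h (fun x => (S.filter (G.Adj x)).card) else 0) := hSe
  rcases S.eq_empty_or_nonempty with rfl | hS
  · rw [dif_neg (by simp)] at hSe'
    refine ⟨{Classical.arbitrary β}, Finset.singleton_nonempty _, fun x _ => ?_⟩
    rw [hSe']
    omega
  · rw [dif_pos hS] at hSe'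
    refine ⟨S, hS, fun x hx => ?_⟩
    rw [hSe']
    exact Finset.inf'_le _ hx

lemma aux_degsum [Fintype β] [Nonempty β] [DecidableEq β] (H : SimpleGraph β)
    [DecidableRel H.Adj] :
    auxDeg H + auxDeg Hᶜ + 1 ≤ Fintype.card β := by
  obtain ⟨S₀, hS₀, hw₀⟩ := auxDeg_witness H
  obtain ⟨S₁, hS₁, hw₁⟩ := auxDeg_witness Hᶜ
  by_cases hmeet : (S₀ ∩ S₁).Nonempty
  · obtain ⟨x, hx⟩ := hmeet
    rw [Finset.mem_inter] at hx
    have h0 : auxDeg H ≤ (Finset.univ.filter (H.Adj x)).card :=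
      le_trans (hw₀ x hx.1)
        (Finset.card_le_card (Finset.filter_subset_filter _ (Finset.subset_univ S₀)))
    have h1 : auxDeg Hᶜ ≤ (Finset.univ.filter (Hᶜ.Adj x)).card :=
      le_trans (hw₁ x hx.2)
        (Finset.card_le_card (Finset.filter_subset_filter _ (Finset.subset_univ S₁)))
    have hdisj : Disjoint (Finset.univ.filter (H.Adj x)) (Finset.univ.filter (Hᶜ.Adj x)) := by
      rw [Finset.disjoint_left]
      intro y hy₁ hy₂
      rw [Finset.mem_filter] at hy₁ hy₂
      exact ((H.compl_adj x y).mp hy₂.2).2 hy₁.2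
    have hsub : Finset.univ.filter (H.Adj x) ∪ Finset.univ.filter (Hᶜ.Adj x)
        ⊆ Finset.univ.erase x := by
      intro y hy
      rw [Finset.mem_union, Finset.mem_filter, Finset.mem_filter] at hy
      rcases hy with hy | hy
      · exact Finset.mem_erase.mpr ⟨hy.2.ne', Finset.mem_univ y⟩
      · exact Finset.mem_erase.mpr ⟨hy.2.ne', Finset.mem_univ y⟩
    have hcards : (Finset.univ.filter (H.Adj x)).card + (Finset.univ.filter (Hᶜ.Adj x)).card
        ≤ (Finset.univ.erase x).card := by
      rw [← Finset.card_union_of_disjoint hdisj]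
      exact Finset.card_le_card hsub
    have hbig : (Finset.univ.erase x).card + 1 = Fintype.card β := by
      rw [Finset.card_erase_of_mem (Finset.mem_univ x), Finset.card_univ]
      have : 0 < Fintype.card β := Fintype.card_pos
      omega
    omega
  · rw [Finset.not_nonempty_iff_eq_empty] at hmeet
    have hdisj : Disjoint S₀ S₁ := Finset.disjoint_iff_inter_eq_empty.mpr hmeet
    obtain ⟨x₀, hx₀⟩ := hS₀
    obtain ⟨x₁, hx₁⟩ := hS₁
    have h0 : auxDeg H + 1 ≤ S₀.card := by
      have hsub : S₀.filter (H.Adj x₀) ⊆ S₀.erase x₀ := by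
        intro y hy
        rw [Finset.mem_filter] at hy
        exact Finset.mem_erase.mpr ⟨hy.2.ne', hy.1⟩
      have hle := le_trans (hw₀ x₀ hx₀) (Finset.card_le_card hsub)
      rw [Finset.card_erase_of_mem hx₀] at hle
      have hpos : 0 < S₀.card := Finset.card_pos.mpr ⟨x₀, hx₀⟩
      omega
    have h1 : auxDeg Hᶜ + 1 ≤ S₁.card := by
      have hsub : S₁.filter (Hᶜ.Adj x₁) ⊆ S₁.erase x₁ := by
        intro y hy
        rw [Finset.mem_filter] at hy
        exact Finset.mem_erase.mpr ⟨hy.2.ne', hy.1⟩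
      have hle := le_trans (hw₁ x₁ hx₁) (Finset.card_le_card hsub)
      rw [Finset.card_erase_of_mem hx₁] at hle
      have hpos : 0 < S₁.card := Finset.card_pos.mpr ⟨x₁, hx₁⟩
      omega
    have hun : S₀.card + S₁.card ≤ Fintype.card β := by
      rw [← Finset.card_union_of_disjoint hdisj, ← Finset.card_univ]
      exact Finset.card_le_card (Finset.subset_univ _)
    omega

lemma aux_gChrom_le [Fintype β] [DecidableEq β] (m : ℕ) (hm : 3 ≤ m) (G : SimpleGraph β)
    [DecidableRel G.Adj] :
    gChrom (cycleGraph m) G ≤ auxDeg G / 2 + 1 := by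
  apply Nat.sInf_le
  obtain ⟨c, hc⟩ := aux_greedy m hm G (auxDeg G) (auxDeg G / 2 + 1) (by omega)
    (auxDeg_spec G) Finset.univ
  refine ⟨c, fun i => ?_⟩
  have hset : {v | c v = i} = {v | v ∈ (Finset.univ : Finset β) ∧ c v = i} := by
    ext v; simp
  rw [hset]
  exact hc i

end Aux

theorem stmt17 {β : Type*} [Fintype β] (m : ℕ) (hm : 4 ≤ m) (H : SimpleGraph β) (n : ℕ)
    (hn : Fintype.card β = n) :
    gChrom (cycleGraph m) H + gChrom (cycleGraph m) Hᶜ ≤ ⌈((n : ℚ) / 2)⌉₊ + 1 := by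
  classical
  rcases Nat.eq_zero_or_pos n with hn0 | hpos
  · haveI : IsEmpty β := Fintype.card_eq_zero_iff.mp (by omega)
    have h0 : gChrom (cycleGraph m) H ≤ 0 := by
      apply Nat.sInf_le
      refine ⟨fun v => isEmptyElim v, fun i => ?_⟩
      rintro ⟨f, -⟩
      exact isEmptyElim ((f ⟨0, by omega⟩).1)
    have h1 : gChrom (cycleGraph m) Hᶜ ≤ 0 := by
      apply Nat.sInf_le
      refine ⟨fun v => isEmptyElim v, fun i => ?_⟩
      rintro ⟨f, -⟩
      exact isEmptyElim ((f ⟨0, by omega⟩).1)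
    omega
  · haveI : Nonempty β := Fintype.card_pos_iff.mp (by omega)
    have hsum := aux_degsum H
    have hg0 : gChrom (cycleGraph m) H ≤ auxDeg H / 2 + 1 := aux_gChrom_le m (by omega) H
    have hg1 : gChrom (cycleGraph m) Hᶜ ≤ auxDeg Hᶜ / 2 + 1 := aux_gChrom_le m (by omega) Hᶜ
    have hceil : n ≤ 2 * ⌈((n : ℚ) / 2)⌉₊ := by
      have h := Nat.le_ceil ((n : ℚ) / 2)
      have h2 : (n : ℚ) ≤ 2 * (⌈((n : ℚ) / 2)⌉₊ : ℚ) := by linarith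
      exact_mod_cast h2
    omega
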